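/- Let k be a field of characteristic zero, G an abelian group, and (R,Δ) a commutative G-graded differential k-algebra such that R is a graded field. Suppose the subgroup G_Z = {x ∈ G : Z_Δ(R) ∩ R_x ≠ 0} of G is free abelian of finite rank with basis {g_1,…,g_n}, and choose nonzero elements z_j ∈ Z_Δ(R) ∩ R_{g_j} for each j. Then Z_Δ(R_1) := Z_Δ(R) ∩ R_1 is a field, each z_j is invertible in Z_Δ(R), and Z_Δ(R) is a Laurent polynomial ring Z_Δ(R_1)[z_1^{±1},…,z_n^{±1}]: the Laurent monomials z_1^{m_1}⋯z_n^{m_n}, (m_1,…,m_n) ∈ ℤ^n, form a basis of Z_Δ(R) as a vector space over Z_Δ(R_1). -/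

import Mathlib

section Defs

variable {k R : Type*} [CommRing k] [CommRing R] [Algebra k R]

/-- An ideal stable under all derivations in `Δ`. -/
def IsDeltaIdeal (Δ : Set (Derivation k R R)) (I : Ideal R) : Prop :=
  ∀ δ ∈ Δ, ∀ x ∈ I, δ x ∈ I

/-- The `Δ`-core of an ideal `J`: the largest `Δ`-stable ideal contained in `J`. -/
def deltaCore (Δ : Set (Derivation k R R)) (J : Ideal R) : Ideal R :=
  sSup {I : Ideal R | IsDeltaIdeal Δ I ∧ I ≤ J}

/-- A `Δ`-prime ideal: a proper `Δ`-ideal `Q` such that whenever a product of two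
`Δ`-ideals lies in `Q`, one of them lies in `Q`. -/
def IsDeltaPrime (Δ : Set (Derivation k R R)) (Q : Ideal R) : Prop :=
  Q ≠ ⊤ ∧ IsDeltaIdeal Δ Q ∧
    ∀ I J : Ideal R, IsDeltaIdeal Δ I → IsDeltaIdeal Δ J → I * J ≤ Q → I ≤ Q ∨ J ≤ Q

/-- A `Δ`-primitive ideal: the `Δ`-core of a maximal ideal. -/
def IsDeltaPrimitive (Δ : Set (Derivation k R R)) (P : Ideal R) : Prop :=
  ∃ M : Ideal R, M.IsMaximal ∧ deltaCore Δ M = P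

end Defs

/-- The `Δ`-center of `R`: elements annihilated by every derivation in `Δ`. -/
def deltaCenter {k R : Type*} [CommRing k] [CommRing R] [Algebra k R]
    (Δ : Set (Derivation k R R)) : Subalgebra k R where
  carrier := {r : R | ∀ δ ∈ Δ, δ r = 0}
  mul_mem' := by
    intro a b ha hb δ hδ
    rw [Derivation.leibniz, ha δ hδ, hb δ hδ, smul_zero, smul_zero, add_zero]
  add_mem' := by
    intro a b ha hb δ hδ
    rw [map_add, ha δ hδ, hb δ hδ, add_zero]
  algebraMap_mem' := by
    intro c δ hδ
    simp

/-- The homogeneous `k`-derivations of degree `d` with respect to a grading `𝒜`: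
those `δ` with `δ(R_g) ⊆ R_{g+d}` for all `g`. -/
def homogeneousDerivations {k R G : Type*} [CommRing k] [CommRing R] [Algebra k R]
    [AddCommGroup G] (𝒜 : G → Submodule k R) (d : G) :
    Submodule k (Derivation k R R) where
  carrier := {δ : Derivation k R R | ∀ g : G, ∀ x ∈ 𝒜 g, δ x ∈ 𝒜 (g + d)}
  add_mem' := by
    intro a b ha hb g x hx
    rw [Derivation.add_apply]
    exact Submodule.add_mem _ (ha g x hx) (hb g x hx)
  zero_mem' := by
    intro g x hx
    simp
  smul_mem' := by
    intro c δ hδ g x hx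
    rw [Derivation.smul_apply]
    exact Submodule.smul_mem _ c (hδ g x hx)

/-- `R` is a graded field with respect to `𝒜`: a domain in which every nonzero
homogeneous element is invertible. -/
def IsGradedField {k R G : Type*} [CommRing k] [CommRing R] [Algebra k R]
    (𝒜 : G → Submodule k R) : Prop :=
  IsDomain R ∧ ∀ (g : G) (x : R), x ∈ 𝒜 g → x ≠ 0 → IsUnit x



section Aux

variable {k R G : Type*} [CommRing k] [CommRing R] [Algebra k R]
    [AddCommGroup G] [DecidableEq G]
    (𝒜 : G → Submodule k R) [GradedAlgebra 𝒜]

theorem aux_decompose_mul_left {g h : G} {x y : R} (hx : x ∈ 𝒜 g) :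
    (DirectSum.decompose 𝒜 (x * y) (g + h) : R) = x * (DirectSum.decompose 𝒜 y h : R) := by
  lift x to 𝒜 g using hx
  rw [DirectSum.decompose_mul, DirectSum.decompose_coe, DirectSum.coe_of_mul_apply_add]

theorem aux_inv_mem (hdom : IsDomain R) {g : G} {x y : R} (hx : x ∈ 𝒜 g)
    (hx0 : x ≠ 0) (hxy : x * y = 1) : y ∈ 𝒜 (-g) := by
  classical
  haveI := hdom
  have key : ∀ h : G, h ≠ -g → (DirectSum.decompose 𝒜 y h : R) = 0 := by
    intro h hh
    have h1 : (DirectSum.decompose 𝒜 (x * y) (g + h) : R)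
        = x * (DirectSum.decompose 𝒜 y h : R) := aux_decompose_mul_left 𝒜 hx
    rw [hxy] at h1
    have h2 : (DirectSum.decompose 𝒜 (1 : R) (g + h) : R) = 0 :=
      DirectSum.decompose_of_mem_ne 𝒜 SetLike.GradedOne.one_mem
        (fun hc => hh (eq_neg_of_add_eq_zero_right hc.symm))
    rw [h2] at h1
    rcases mul_eq_zero.mp h1.symm with h3 | h3
    · exact absurd h3 hx0
    · exact h3
  rw [← DirectSum.sum_support_decompose 𝒜 y]
  refine Submodule.sum_mem _ fun h _ => ?_
  by_cases hcase : h = -g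
  · subst hcase; exact SetLike.coe_mem _
  · rw [key h hcase]; exact Submodule.zero_mem _

end Aux

section Aux2

variable {k R G : Type*} [CommRing k] [CommRing R] [Algebra k R]
    [AddCommGroup G] [DecidableEq G]
    (𝒜 : G → Submodule k R) [GradedAlgebra 𝒜]

theorem aux_comp_central (Δ : Submodule k (Derivation k R R))
    (hΔ : Δ = ⨆ d : G, (homogeneousDerivations 𝒜 d ⊓ Δ))
    {x : R} (hx : x ∈ deltaCenter (Δ : Set (Derivation k R R))) (h : G) :
    (DirectSum.decompose 𝒜 x h : R) ∈ deltaCenter (Δ : Set (Derivation k R R)) := by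
  classical
  intro δ hδ
  have hδ' : δ ∈ (⨆ d : G, (homogeneousDerivations 𝒜 d ⊓ Δ)) := hΔ ▸ hδ
  refine Submodule.iSup_induction (motive := fun δ' : Derivation k R R =>
      δ' ((DirectSum.decompose 𝒜 x h : R)) = 0) _ hδ' ?_ ?_ ?_
  · intro d δ' hmemd
    obtain ⟨hde, hmem⟩ := Submodule.mem_inf.mp hmemd
    by_cases hs : h ∈ (DirectSum.decompose 𝒜 x).support
    · have e1 : ∑ i ∈ (DirectSum.decompose 𝒜 x).support,
          δ' ((DirectSum.decompose 𝒜 x i : R)) = 0 := by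
        calc ∑ i ∈ (DirectSum.decompose 𝒜 x).support,
              δ' ((DirectSum.decompose 𝒜 x i : R))
            = δ'.toLinearMap (∑ i ∈ (DirectSum.decompose 𝒜 x).support,
              (DirectSum.decompose 𝒜 x i : R)) := (map_sum _ _ _).symm
          _ = δ' x := by rw [DirectSum.sum_support_decompose]; rfl
          _ = 0 := hx δ' hmem
    
      have e3 : (DirectSum.decompose 𝒜 ((0 : R)) (h + d) : R)
          = ∑ i ∈ (DirectSum.decompose 𝒜 x).support,
            (DirectSum.decompose 𝒜 (δ' ((DirectSum.decompose 𝒜 x i : R))) (h + d) : R) := by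
        rw [← e1, DirectSum.decompose_sum, DFinsupp.finset_sum_apply,
          AddSubmonoidClass.coe_finset_sum]
      rw [DirectSum.decompose_zero] at e3
      simp only [DirectSum.zero_apply, ZeroMemClass.coe_zero] at e3
      have e4 : ∑ i ∈ (DirectSum.decompose 𝒜 x).support,
            (DirectSum.decompose 𝒜 (δ' ((DirectSum.decompose 𝒜 x i : R))) (h + d) : R)
          = δ' ((DirectSum.decompose 𝒜 x h : R)) := by
        rw [Finset.sum_eq_single_of_mem h hs]
        · exact DirectSum.decompose_of_mem_same 𝒜 (hde h _ (SetLike.coe_mem _))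
        · intro i _ hne
          exact DirectSum.decompose_of_mem_ne 𝒜 (hde i _ (SetLike.coe_mem _))
            (fun hc => hne (add_right_cancel hc))
      rw [e4] at e3
      exact e3.symm
    · have h0 : DirectSum.decompose 𝒜 x h = 0 := by
        rwa [DFinsupp.notMem_support_iff] at hs
      rw [h0, ZeroMemClass.coe_zero, map_zero]
  · simp
  · intro a b ha hb
    rw [Derivation.add_apply, ha, hb, add_zero]

theorem aux_inv_central (Δ : Set (Derivation k R R)) (u : Rˣ)
    (hu : (u : R) ∈ deltaCenter Δ) : ((u⁻¹ : Rˣ) : R) ∈ deltaCenter Δ := by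
  intro δ hδ
  have h1 : δ ((u : R) * ((u⁻¹ : Rˣ) : R)) = 0 := by
    rw [Units.mul_inv]; exact δ.map_one_eq_zero
  rw [Derivation.leibniz, hu δ hδ, smul_zero, add_zero, smul_eq_mul] at h1
  have h2 := congrArg (fun r => ((u⁻¹ : Rˣ) : R) * r) h1
  simpa [← mul_assoc, Units.inv_mul] using h2

theorem aux_zpow_mem {gj : G} (u : Rˣ) (hu : (u : R) ∈ 𝒜 gj)
    (hu' : ((u⁻¹ : Rˣ) : R) ∈ 𝒜 (-gj)) (m : ℤ) : ((u ^ m : Rˣ) : R) ∈ 𝒜 (m • gj) := by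
  cases m with
  | ofNat n =>
      rw [Int.ofNat_eq_coe, zpow_natCast, Units.val_pow_eq_pow_val, natCast_zsmul]
      exact SetLike.pow_mem_graded n hu
  | negSucc n =>
      rw [zpow_negSucc, ← inv_pow, Units.val_pow_eq_pow_val, negSucc_zsmul, ← smul_neg]
      exact SetLike.pow_mem_graded _ hu'

theorem aux_zpow_central (Δ : Set (Derivation k R R)) (u : Rˣ)
    (hu : (u : R) ∈ deltaCenter Δ) (hu' : ((u⁻¹ : Rˣ) : R) ∈ deltaCenter Δ) (m : ℤ) :
    ((u ^ m : Rˣ) : R) ∈ deltaCenter Δ := by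
  cases m with
  | ofNat n =>
      rw [Int.ofNat_eq_coe, zpow_natCast, Units.val_pow_eq_pow_val]
      exact pow_mem hu n
  | negSucc n =>
      rw [zpow_negSucc, ← inv_pow, Units.val_pow_eq_pow_val]
      exact pow_mem hu' _

end Aux2


/-- Let `(R,Δ)` be a commutative `G`-graded differential `k`-algebra
with `R` a graded field, and suppose `G_Z = {x : Z_Δ(R) ∩ R_x ≠ 0}` is free abelian of
finite rank with basis `g 0, …, g (n-1)`; choose nonzero `z j ∈ Z_Δ(R) ∩ R_{g j}`.
Then `Z_Δ(R₁) = Z_Δ(R) ∩ R_0` is a field, each `z j` is invertible in `Z_Δ(R)`, and the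
Laurent monomials in the `z j` form a basis of `Z_Δ(R)` as a `Z_Δ(R₁)`-vector space. -/
theorem deltaCenter_laurent_over_field
    {k R G : Type*} [Field k] [CharZero k] [CommRing R] [Algebra k R]
    [AddCommGroup G] [DecidableEq G]
    (𝒜 : G → Submodule k R) [GradedAlgebra 𝒜]
    (Δ : Submodule k (Derivation k R R))
    (hΔ : Δ = ⨆ d : G, (homogeneousDerivations 𝒜 d ⊓ Δ))
    (hgf : IsGradedField 𝒜)
    (n : ℕ) (g : Fin n → G)
    -- `g` is a basis of the free abelian group `G_Z`
    (hgmem : ∀ j, g j ∈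
      {x : G | ∃ r : R, r ≠ 0 ∧ r ∈ deltaCenter (Δ : Set (Derivation k R R)) ∧ r ∈ 𝒜 x})
    (hgspan : ∀ x ∈
      {x : G | ∃ r : R, r ≠ 0 ∧ r ∈ deltaCenter (Δ : Set (Derivation k R R)) ∧ r ∈ 𝒜 x},
      ∃ m : Fin n → ℤ, x = ∑ j, m j • g j)
    (hgindep : ∀ m : Fin n → ℤ, (∑ j, m j • g j) = 0 → m = 0)
    -- the chosen nonzero homogeneous central elements
    (z : Fin n → R) (hz : ∀ j, z j ≠ 0 ∧
      z j ∈ deltaCenter (Δ : Set (Derivation k R R)) ∧ z j ∈ 𝒜 (g j)) :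
    -- Z_Δ(R₁) = Z_Δ(R) ∩ R_0 is a field
    (∀ x : R, x ∈ deltaCenter (Δ : Set (Derivation k R R)) → x ∈ 𝒜 (0 : G) → x ≠ 0 →
      ∃ y : R, y ∈ deltaCenter (Δ : Set (Derivation k R R)) ∧ y ∈ 𝒜 (0 : G) ∧ x * y = 1) ∧
    -- each z j is invertible in Z_Δ(R), and the Laurent monomials in the z j form a
    -- basis of Z_Δ(R) over Z_Δ(R₁)
    (∃ u : Fin n → Rˣ, (∀ j, (u j : R) = z j) ∧
      (∀ j, (((u j)⁻¹ : Rˣ) : R) ∈ deltaCenter (Δ : Set (Derivation k R R))) ∧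
      -- the Laurent monomials span Z_Δ(R) over Z_Δ(R₁)
      (∀ x ∈ deltaCenter (Δ : Set (Derivation k R R)),
        ∃ c : (Fin n → ℤ) →₀ R,
          (∀ m, c m ∈ deltaCenter (Δ : Set (Derivation k R R)) ∧ c m ∈ 𝒜 (0 : G)) ∧
          x = c.sum fun m a => a * ((∏ j, u j ^ m j : Rˣ) : R)) ∧
      -- the Laurent monomials are linearly independent over Z_Δ(R₁)
      (∀ c : (Fin n → ℤ) →₀ R,
        (∀ m, c m ∈ deltaCenter (Δ : Set (Derivation k R R)) ∧ c m ∈ 𝒜 (0 : G)) →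
        (c.sum fun m a => a * ((∏ j, u j ^ m j : Rˣ) : R)) = 0 → c = 0)) := by
  classical
  haveI hdom : IsDomain R := hgf.1
  constructor
  · -- Z_Δ(R₁) is a field
    intro x hxZ hx0 hxne
    obtain ⟨v, hv⟩ := hgf.2 0 x hx0 hxne
    refine ⟨((v⁻¹ : Rˣ) : R), ?_, ?_, ?_⟩
    · exact aux_inv_central _ v (hv.symm ▸ hxZ)
    · have h1 := aux_inv_mem 𝒜 hgf.1 (hv.symm ▸ hx0 : (v : R) ∈ 𝒜 (0 : G))
        (hv.symm ▸ hxne) (Units.mul_inv v)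
      rwa [neg_zero] at h1
    · rw [← hv]; exact Units.mul_inv v
  · -- Laurent polynomial structure
    have hunit : ∀ j, IsUnit (z j) := fun j => hgf.2 (g j) (z j) (hz j).2.2 (hz j).1
    set u : Fin n → Rˣ := fun j => (hunit j).unit with hudef
    have hu : ∀ j, ((u j : Rˣ) : R) = z j := fun j => (hunit j).unit_spec
    have huZ : ∀ j, ((u j : Rˣ) : R) ∈ deltaCenter (Δ : Set (Derivation k R R)) := by
      intro j; rw [hu j]; exact (hz j).2.1
    have huA : ∀ j, ((u j : Rˣ) : R) ∈ 𝒜 (g j) := by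
      intro j; rw [hu j]; exact (hz j).2.2
    have hinvZ : ∀ j, (((u j)⁻¹ : Rˣ) : R) ∈ deltaCenter (Δ : Set (Derivation k R R)) :=
      fun j => aux_inv_central _ (u j) (huZ j)
    have hinvA : ∀ j, (((u j)⁻¹ : Rˣ) : R) ∈ 𝒜 (-(g j)) := fun j =>
      aux_inv_mem 𝒜 hgf.1 (huA j) (by rw [hu j]; exact (hz j).1) (Units.mul_inv (u j))
    have monZ : ∀ m : Fin n → ℤ,
        ((∏ j, u j ^ m j : Rˣ) : R) ∈ deltaCenter (Δ : Set (Derivation k R R)) := by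
      intro m
      have hcast : ((∏ j, u j ^ m j : Rˣ) : R) = ∏ j, ((u j ^ m j : Rˣ) : R) :=
        map_prod (Units.coeHom R) _ _
      rw [hcast]
      exact prod_mem fun j _ => aux_zpow_central _ (u j) (huZ j) (hinvZ j) (m j)
    have monA : ∀ m : Fin n → ℤ, ((∏ j, u j ^ m j : Rˣ) : R) ∈ 𝒜 (∑ j, m j • g j) := by
      intro m
      have hcast : ((∏ j, u j ^ m j : Rˣ) : R) = ∏ j, ((u j ^ m j : Rˣ) : R) :=
        map_prod (Units.coeHom R) _ _
      rw [hcast]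
      exact SetLike.prod_mem_graded 𝒜 (fun j => m j • g j) _
        (fun j _ => aux_zpow_mem 𝒜 (u j) (huA j) (hinvA j) (m j))
    have hphiinj : Function.Injective (fun m : Fin n → ℤ => ∑ j, m j • g j) := by
      intro a b hab
      have h1 : (∑ j, (a - b) j • g j) = 0 := by
        simp only [Pi.sub_apply, sub_smul, Finset.sum_sub_distrib]
        rw [sub_eq_zero]
        exact hab
      exact sub_eq_zero.mp (hgindep _ h1)
    have hphineg : ∀ m : Fin n → ℤ, (∑ j, (-m) j • g j) = -∑ j, m j • g j := by
      intro m
      simp [neg_smul, Finset.sum_neg_distrib]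
    have moncancel : ∀ m : Fin n → ℤ,
        ((∏ j, u j ^ (-m) j : Rˣ) : R) * ((∏ j, u j ^ m j : Rˣ) : R) = 1 := by
      intro m
      rw [← Units.val_mul, ← Finset.prod_mul_distrib]
      simp [← zpow_add]
    refine ⟨u, hu, hinvZ, ?_, ?_⟩
    · -- spanning
      intro x hx
      have hsel : ∀ h ∈ (DirectSum.decompose 𝒜 x).support,
          ∃ mmh : Fin n → ℤ, h = ∑ j, mmh j • g j := by
        intro h hh
        refine hgspan h ⟨(DirectSum.decompose 𝒜 x h : R), ?_,
          aux_comp_central 𝒜 Δ hΔ hx h, SetLike.coe_mem _⟩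
        intro hc
        exact DFinsupp.mem_support_iff.mp hh (Subtype.ext hc)
      choose! mm hmm using hsel
      refine ⟨∑ h ∈ (DirectSum.decompose 𝒜 x).support,
        Finsupp.single (mm h)
          ((DirectSum.decompose 𝒜 x h : R) * ((∏ j, u j ^ (-(mm h)) j : Rˣ) : R)), ?_, ?_⟩
      · intro m₀
        rw [Finsupp.finset_sum_apply]
        constructor
        · refine Subalgebra.sum_mem _ fun h hh => ?_
          rw [Finsupp.single_apply]
          split
          · exact mul_mem (aux_comp_central 𝒜 Δ hΔ hx h) (monZ _)
          · exact zero_mem _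
        · refine Submodule.sum_mem _ fun h hh => ?_
          rw [Finsupp.single_apply]
          split
          · have h1 := SetLike.mul_mem_graded
              (SetLike.coe_mem (DirectSum.decompose 𝒜 x h)) (monA (-(mm h)))
            rw [hphineg, ← hmm h hh, add_neg_cancel] at h1
            exact h1
          · exact zero_mem _
      · have step := (Finsupp.sum_finsetSum_index
            (s := (DirectSum.decompose 𝒜 x).support)
            (g := fun h => Finsupp.single (mm h)
              ((DirectSum.decompose 𝒜 x h : R) * ((∏ j, u j ^ (-(mm h)) j : Rˣ) : R)))
            (h := fun m a => a * ((∏ j, u j ^ m j : Rˣ) : R))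
            (fun _ => zero_mul _) (fun _ a b => add_mul a b _)).symm
        rw [step]
        refine ((DirectSum.sum_support_decompose 𝒜 x).symm).trans ?_
        refine Finset.sum_congr rfl fun h hh => ?_
        beta_reduce
        rw [Finsupp.sum_single_index (h := fun (m : Fin n → ℤ) (a : R) => a * ((∏ j, u j ^ m j : Rˣ) : R))
          (zero_mul _), mul_assoc, moncancel, mul_one]
    · -- independence
      intro c hc hsum
      ext m₀
      rw [Finsupp.coe_zero, Pi.zero_apply]
      by_cases hm₀ : m₀ ∈ c.support
      · have hterm : ∀ m : Fin n → ℤ,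
            c m * ((∏ j, u j ^ m j : Rˣ) : R) ∈ 𝒜 (∑ j, m j • g j) := by
          intro m
          have h1 := SetLike.mul_mem_graded (hc m).2 (monA m)
          rwa [zero_add] at h1
        have h0 : (DirectSum.decompose 𝒜
            (∑ m ∈ c.support, c m * ((∏ j, u j ^ m j : Rˣ) : R)) (∑ j, m₀ j • g j) : R) = 0 := by
          have he : (∑ m ∈ c.support, c m * ((∏ j, u j ^ m j : Rˣ) : R)) = 0 := hsum
          rw [he, DirectSum.decompose_zero]
          simp
        rw [DirectSum.decompose_sum, DFinsupp.finset_sum_apply, AddSubmonoidClass.coe_finset_sum,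
          Finset.sum_eq_single_of_mem m₀ hm₀ (fun m _ hne =>
            DirectSum.decompose_of_mem_ne 𝒜 (hterm m) (fun hceq => hne (hphiinj hceq))),
          DirectSum.decompose_of_mem_same 𝒜 (hterm m₀)] at h0
        exact (Units.mul_left_eq_zero _).mp h0
      · exact Finsupp.notMem_support_iff.mp hm₀
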